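/- arXiv:2205.12863 — 2 statements merged into one kernel-verified Lean document; each statement's English description precedes it below -/
import Mathlib

section
/- Let Ω ⊆ ℝⁿ be nonempty compact and f : ℝⁿ → ℝᵐ continuous, with ψ(x) := max_{y ∈ Ω} min_{i} (f_i(x) - f_i(y)). Then the set of weakly efficient solutions S_w equals {x ∈ Ω : ψ(x) = 0}. -/
/-- S_w = {x ∈ Ω : ψ(x) = 0}. -/
theorem stmt_2 {n m : ℕ} (hm : 0 < m)
    (Ω : Set (EuclideanSpace ℝ (Fin n))) (hΩ : Ω.Nonempty) (hcpt : IsCompact Ω)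
    (f : EuclideanSpace ℝ (Fin n) → Fin m → ℝ) (hf : Continuous f) :
    {x | x ∈ Ω ∧ ¬ ∃ y ∈ Ω, ∀ i, f y i < f x i} =
      {x | x ∈ Ω ∧ sSup ((fun y => ⨅ i, (f x i - f y i)) '' Ω) = 0} := by
  haveI : Nonempty (Fin m) := ⟨⟨0, hm⟩⟩
  ext x
  simp only [Set.mem_setOf_eq]
  constructor
  · rintro ⟨hx, hne⟩
    refine ⟨hx, ?_⟩
    -- g y ≤ 0 for all y ∈ Ω
    have hle : ∀ y ∈ Ω, (⨅ i, (f x i - f y i)) ≤ 0 := by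
      intro y hy
      by_contra h
      push_neg at h
      apply hne
      refine ⟨y, hy, fun i => ?_⟩
      have : (0:ℝ) < f x i - f y i := lt_of_lt_of_le h
        (ciInf_le (Set.Finite.bddBelow (Set.finite_range _)) i)
      linarith
    have hsup_le : sSup ((fun y => ⨅ i, (f x i - f y i)) '' Ω) ≤ 0 :=
      csSup_le (hΩ.image _) (by rintro _ ⟨y, hy, rfl⟩; exact hle y hy)
    have h0mem : (0:ℝ) ∈ (fun y => ⨅ i, (f x i - f y i)) '' Ω := by
      refine ⟨x, hx, ?_⟩
      simp
    have hsup_ge : (0:ℝ) ≤ sSup ((fun y => ⨅ i, (f x i - f y i)) '' Ω) :=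
      le_csSup ⟨0, by rintro _ ⟨y, hy, rfl⟩; exact hle y hy⟩ h0mem
    linarith
  · rintro ⟨hx, hsup⟩
    refine ⟨hx, ?_⟩
    rintro ⟨y, hy, hlt⟩
    -- g continuous, image of compact is bddAbove
    have hg : Continuous fun y => ⨅ i, (f x i - f y i) := by
      have : ∀ y, (⨅ i, (f x i - f y i)) =
          Finset.univ.inf' Finset.univ_nonempty (fun i => f x i - f y i) := by
        intro y
        rw [Finset.inf'_eq_csInf_image, Finset.coe_univ, Set.image_univ]
        rfl
      simp only [this]
      exact Continuous.finset_inf'_apply Finset.univ_nonempty fun i _ =>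
        continuous_const.sub ((continuous_apply i).comp hf)
    have hbdd : BddAbove ((fun y => ⨅ i, (f x i - f y i)) '' Ω) :=
      (hcpt.image hg).bddAbove
    have h0 : (⨅ i, (f x i - f y i)) ≤ 0 := by
      rw [← hsup]
      exact le_csSup hbdd ⟨y, hy, rfl⟩
    obtain ⟨i, hi⟩ := Finite.exists_min (fun i => f x i - f y i)
    have hinf : (⨅ i, (f x i - f y i)) = f x i - f y i :=
      le_antisymm (ciInf_le (Set.Finite.bddBelow (Set.finite_range _)) i) (le_ciInf hi)
    rw [hinf] at h0
    linarith [hlt i]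
end

section
/- Let Ω ⊆ ℝⁿ be nonempty compact and f : ℝⁿ → ℝᵐ continuous. Then for every d > 0 there exists δ > 0 such that for all ε ∈ ℝᵐ₊ with max_i ε_i < δ, every weakly ε-efficient solution x satisfies dist(x, S_w) < d; that is, S_w^ε ⊆ S_w + d·B where B is the closed unit ball. -/
/-- S_w^ε ⊆ S_w + d·B whenever max_i ε_i is small enough. -/
theorem stmt_7 {n m : ℕ} (hm : 0 < m)
    (Ω : Set (EuclideanSpace ℝ (Fin n))) (hΩ : Ω.Nonempty) (hcpt : IsCompact Ω)
    (f : EuclideanSpace ℝ (Fin n) → Fin m → ℝ) (hf : Continuous f)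
    (d : ℝ) (hd : 0 < d) :
    ∃ δ > 0, ∀ ε : Fin m → ℝ, (∀ i, 0 ≤ ε i) → (⨆ i, ε i) < δ →
      ∀ x, (x ∈ Ω ∧ ∀ y ∈ Ω, ∃ i, f y i - f x i + ε i ≥ 0) →
        Metric.infDist x {x' | x' ∈ Ω ∧ ¬ ∃ y ∈ Ω, ∀ i, f y i < f x' i} < d := by
  haveI : Nonempty (Fin m) := Fin.pos_iff_nonempty.mp hm
  set Sw : Set (EuclideanSpace ℝ (Fin n)) :=
    {x' | x' ∈ Ω ∧ ¬ ∃ y ∈ Ω, ∀ i, f y i < f x' i} with hSw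
  set A : Set (EuclideanSpace ℝ (Fin n)) :=
    {x | x ∈ Ω ∧ d ≤ Metric.infDist x Sw} with hA
  have hAcpt : IsCompact A := by
    have : A = Ω ∩ {x | d ≤ Metric.infDist x Sw} := rfl
    rw [this]
    exact hcpt.inter_right (isClosed_le continuous_const (Metric.continuous_infDist_pt Sw))
  -- each point of A is not weakly efficient, so it is dominated
  have hdom : ∀ x ∈ A, ∃ y ∈ Ω, ∀ i, f y i < f x i := by
    intro x hx
    by_contra h
    have hxSw : x ∈ Sw := ⟨hx.1, h⟩
    have : Metric.infDist x Sw = 0 := Metric.infDist_zero_of_mem hxSw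
    linarith [hx.2]
  by_cases hAe : A = ∅
  · refine ⟨1, one_pos, fun ε hε hεδ x hx => ?_⟩
    by_contra h
    have : x ∈ A := ⟨hx.1, le_of_not_gt h⟩
    simp [hAe] at this
  · -- A nonempty; build finite subcover
    have hcoerce : ∀ z : ↥A, ∃ y ∈ Ω, ∀ i, f y i < f (z : EuclideanSpace ℝ (Fin n)) i :=
      fun z => hdom z z.2
    choose y hyΩ hylt using hcoerce
    set η : ↥A → ℝ := fun z =>
      Finset.univ.inf' Finset.univ_nonempty
        (fun i => f (z : EuclideanSpace ℝ (Fin n)) i - f (y z) i) with hη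
    have hηpos : ∀ z, 0 < η z := by
      intro z
      rw [hη]
      apply Finset.lt_inf'_iff _ |>.mpr
      intro i _
      have := hylt z i
      linarith
    set U : ↥A → Set (EuclideanSpace ℝ (Fin n)) := fun z =>
      {x' | ∀ i, η z / 2 < f x' i - f (y z) i} with hU
    have hUopen : ∀ z, IsOpen (U z) := by
      intro z
      have : U z = ⋂ i, (fun x' => f x' i - f (y z) i) ⁻¹' Set.Ioi (η z / 2) := by
        ext x'; simp [hU, Set.mem_iInter]
      rw [this]
      apply isOpen_iInter_of_finite
      intro i
      exact (isOpen_Ioi).preimage (((continuous_apply i).comp hf).sub continuous_const)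
    have hcov : A ⊆ ⋃ z : ↥A, U z := by
      intro x hx
      refine Set.mem_iUnion.mpr ⟨⟨x, hx⟩, fun i => ?_⟩
      have h1 : η ⟨x, hx⟩ ≤ f x i - f (y ⟨x, hx⟩) i := by
        rw [hη]; exact Finset.inf'_le _ (Finset.mem_univ i)
      have := hηpos ⟨x, hx⟩
      linarith
    obtain ⟨t, ht⟩ := hAcpt.elim_finite_subcover U hUopen hcov
    have htne : t.Nonempty := by
      obtain ⟨a, ha⟩ := Set.nonempty_iff_ne_empty.mpr hAe
      obtain ⟨z, hz⟩ := Set.mem_iUnion₂.mp (ht ha)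
      exact ⟨z, hz.1⟩
    set δ : ℝ := t.inf' htne (fun z => η z / 2) with hδ
    have hδpos : 0 < δ := by
      rw [hδ]
      apply Finset.lt_inf'_iff _ |>.mpr
      intro z _
      linarith [hηpos z]
    refine ⟨δ, hδpos, fun ε hε hεδ x hx => ?_⟩
    by_contra h
    have hxA : x ∈ A := ⟨hx.1, le_of_not_gt h⟩
    obtain ⟨z, hzt, hzU⟩ := Set.mem_iUnion₂.mp (ht hxA)
    -- x is ε-efficient, test with y z
    obtain ⟨i, hi⟩ := hx.2 (y z) (hyΩ z)
    have h1 : f x i - f (y z) i ≤ ε i := by linarith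
    have h2 : ε i ≤ ⨆ j, ε j := le_ciSup (Set.Finite.bddAbove (Set.finite_range ε)) i
    have h3 : δ ≤ η z / 2 := Finset.inf'_le _ hzt
    have h4 : η z / 2 < f x i - f (y z) i := hzU i
    linarith
end
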